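/- Suppose ξ ∈ Δ(K) satisfies u(ξ) = (Cav u)(ξ). Then for every δ ∈ [0,1) the trivial split (revealing no information) is optimal at ξ; in particular v_δ(ξ) = (1−δ)·u(ξ) + δ·v_δ(ξM). -/

import Mathlib

open scoped BigOperators

noncomputable section

/-- A row-stochastic matrix: nonnegative entries, rows summing to 1. -/
def IsStochastic {K : Type*} [Fintype K] (M : Matrix K K ℝ) : Prop :=
  (∀ i j, 0 ≤ M i j) ∧ ∀ i, ∑ j, M i j = 1

/-- A split of `ξ`: a countable family of weights `α` and beliefs `ξs` with
`α s ≥ 0`, `ξs s ∈ Δ(K)`, `∑ α = 1` and `∑ α_s ξ_s = ξ`. -/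
def IsSplit {K : Type*} [Fintype K] (ξ : K → ℝ) (α : ℕ → ℝ) (ξs : ℕ → K → ℝ) : Prop :=
  (∀ s, 0 ≤ α s) ∧ (∀ s, ξs s ∈ stdSimplex ℝ K) ∧ (∑' s, α s) = 1 ∧
    ∀ ℓ : K, (∑' s, α s * ξs s ℓ) = ξ ℓ

/-- The one-stage payoff of a split in the δ-discounted Bellman equation. -/
def splitPayoff {K : Type*} [Fintype K] (M : Matrix K K ℝ) (u : (K → ℝ) → ℝ) (δ : ℝ)
    (w : (K → ℝ) → ℝ) (α : ℕ → ℝ) (ξs : ℕ → K → ℝ) : ℝ :=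
  ∑' s, α s * ((1 - δ) * u (ξs s) + δ * w (Matrix.vecMul (ξs s) M))

/-- `v` is the family of δ-discounted values of the Markovian persuasion game:
for each `δ ∈ [0,1)`, `v δ` is bounded between `0` and `C = ‖u‖∞` on `Δ(K)` and
satisfies the Bellman equation there. -/
def IsValueFamily {K : Type*} [Fintype K] (M : Matrix K K ℝ) (u : (K → ℝ) → ℝ) (C : ℝ)
    (v : ℝ → (K → ℝ) → ℝ) : Prop :=
  ∀ δ ∈ Set.Ico (0 : ℝ) 1,
    (∀ ξ ∈ stdSimplex ℝ K, 0 ≤ v δ ξ ∧ v δ ξ ≤ C) ∧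
    ∀ ξ ∈ stdSimplex ℝ K,
      v δ ξ = sSup { r : ℝ | ∃ α ξs, IsSplit ξ α ξs ∧ r = splitPayoff M u δ (v δ) α ξs }

/-- The concavification of `g`: the smallest concave majorant of `g` on `Δ(K)`. -/
def cav {K : Type*} [Fintype K] (g : (K → ℝ) → ℝ) (ξ : K → ℝ) : ℝ :=
  sInf { y : ℝ | ∃ h : (K → ℝ) → ℝ, ConcaveOn ℝ (stdSimplex ℝ K) h ∧
    (∀ p ∈ stdSimplex ℝ K, g p ≤ h p) ∧ y = h ξ }

section AuxLemmas

variable {K : Type*} [Fintype K]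

lemma mem_simplex_le_one {ξ : K → ℝ} (h : ξ ∈ stdSimplex ℝ K) (ℓ : K) : ξ ℓ ≤ 1 := by
  calc ξ ℓ ≤ ∑ j, ξ j := Finset.single_le_sum (fun j _ => h.1 j) (Finset.mem_univ ℓ)
  _ = 1 := h.2

lemma IsSplit.summable {ξ : K → ℝ} {α : ℕ → ℝ} {ξs : ℕ → K → ℝ} (h : IsSplit ξ α ξs) :
    Summable α := by
  by_contra hs
  have h1 := h.2.2.1
  rw [tsum_eq_zero_of_not_summable hs] at h1
  norm_num at h1

lemma IsSplit.summable_coord {ξ : K → ℝ} {α : ℕ → ℝ} {ξs : ℕ → K → ℝ}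
    (h : IsSplit ξ α ξs) (ℓ : K) : Summable (fun s => α s * ξs s ℓ) :=
  Summable.of_nonneg_of_le (fun s => mul_nonneg (h.1 s) ((h.2.1 s).1 ℓ))
    (fun s => mul_le_of_le_one_right (h.1 s) (mem_simplex_le_one (h.2.1 s) ℓ)) h.summable

lemma vecMul_mem_simplex {M : Matrix K K ℝ} (hM : IsStochastic M) {ξ : K → ℝ}
    (hξ : ξ ∈ stdSimplex ℝ K) : Matrix.vecMul ξ M ∈ stdSimplex ℝ K := by
  refine ⟨fun j => ?_, ?_⟩
  · simp only [Matrix.vecMul, dotProduct]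
    exact Finset.sum_nonneg fun i _ => mul_nonneg (hξ.1 i) (hM.1 i j)
  · simp only [Matrix.vecMul, dotProduct]
    rw [Finset.sum_comm]
    simp_rw [← Finset.mul_sum]
    calc ∑ i, ξ i * ∑ j, M i j = ∑ i, ξ i := by
          refine Finset.sum_congr rfl fun i _ => by rw [hM.2 i, mul_one]
      _ = 1 := hξ.2

lemma isSplit_trivial {ξ : K → ℝ} (hξ : ξ ∈ stdSimplex ℝ K) :
    IsSplit ξ (fun s => if s = 0 then (1 : ℝ) else 0) (fun _ => ξ) := by
  refine ⟨fun s => by dsimp only; split <;> norm_num, fun _ => hξ, ?_, fun ℓ => ?_⟩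
  · exact tsum_ite_eq 0 1
  · simp only [ite_mul, one_mul, zero_mul]
    exact tsum_ite_eq 0 (fun _ => ξ ℓ)

lemma splitPayoff_trivial (M : Matrix K K ℝ) (u : (K → ℝ) → ℝ) (δ : ℝ)
    (w : (K → ℝ) → ℝ) (ξ : K → ℝ) :
    splitPayoff M u δ w (fun s => if s = 0 then (1 : ℝ) else 0) (fun _ => ξ)
      = (1 - δ) * u ξ + δ * w (Matrix.vecMul ξ M) := by
  unfold splitPayoff
  simp only [ite_mul, one_mul, zero_mul]
  exact tsum_ite_eq 0 _

lemma payoff_aux {M : Matrix K K ℝ} (hM : IsStochastic M) {u : (K → ℝ) → ℝ}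
    (hu0 : ∀ p ∈ stdSimplex ℝ K, 0 ≤ u p) {C : ℝ} (hC : ∀ p ∈ stdSimplex ℝ K, u p ≤ C)
    {w : (K → ℝ) → ℝ} (hw : ∀ p ∈ stdSimplex ℝ K, 0 ≤ w p ∧ w p ≤ C)
    {δ : ℝ} (hδ0 : 0 ≤ δ) (hδ1 : δ < 1)
    {ξ : K → ℝ} {α : ℕ → ℝ} {ξs : ℕ → K → ℝ} (hs : IsSplit ξ α ξs) :
    (∀ s, 0 ≤ α s * ((1 - δ) * u (ξs s) + δ * w (Matrix.vecMul (ξs s) M)))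
    ∧ Summable (fun s => α s * ((1 - δ) * u (ξs s) + δ * w (Matrix.vecMul (ξs s) M)))
    ∧ splitPayoff M u δ w α ξs ≤ C := by
  have hterm0 : ∀ s, 0 ≤ α s * ((1 - δ) * u (ξs s) + δ * w (Matrix.vecMul (ξs s) M)) := by
    intro s
    have h1 := hu0 _ (hs.2.1 s)
    have h2 := (hw _ (vecMul_mem_simplex hM (hs.2.1 s))).1
    exact mul_nonneg (hs.1 s)
      (add_nonneg (mul_nonneg (by linarith) h1) (mul_nonneg hδ0 h2))
  have htermC : ∀ s, α s * ((1 - δ) * u (ξs s) + δ * w (Matrix.vecMul (ξs s) M)) ≤ α s * C := by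
    intro s
    refine mul_le_mul_of_nonneg_left ?_ (hs.1 s)
    have h1 := hC _ (hs.2.1 s)
    have h2 := (hw _ (vecMul_mem_simplex hM (hs.2.1 s))).2
    nlinarith
  have hsumm : Summable (fun s => α s * ((1 - δ) * u (ξs s) + δ * w (Matrix.vecMul (ξs s) M))) :=
    Summable.of_nonneg_of_le hterm0 htermC (hs.summable.mul_right C)
  refine ⟨hterm0, hsumm, ?_⟩
  calc splitPayoff M u δ w α ξs ≤ ∑' s, α s * C :=
        Summable.tsum_le_tsum htermC hsumm (hs.summable.mul_right C)
    _ = (∑' s, α s) * C := tsum_mul_right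
    _ = C := by rw [hs.2.2.1, one_mul]

lemma jensen_split {g : (K → ℝ) → ℝ} (hg : ConcaveOn ℝ (stdSimplex ℝ K) g)
    (hg0 : ∀ p ∈ stdSimplex ℝ K, 0 ≤ g p)
    {ξ : K → ℝ} (hξ : ξ ∈ stdSimplex ℝ K) {α : ℕ → ℝ} {ξs : ℕ → K → ℝ}
    (hs : IsSplit ξ α ξs) (n : ℕ) :
    ∑ s ∈ Finset.range n, α s * g (ξs s) ≤ g ξ := by
  obtain ⟨hα, hξsm, hsum, hcomb⟩ := hs
  have hαs : Summable α := IsSplit.summable ⟨hα, hξsm, hsum, hcomb⟩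
  have hcoordsum : ∀ ℓ, Summable (fun s => α s * ξs s ℓ) :=
    IsSplit.summable_coord ⟨hα, hξsm, hsum, hcomb⟩
  have hT : ∑ s ∈ Finset.range n, α s ≤ 1 := by
    rw [← hsum]; exact Summable.sum_le_tsum _ (fun s _ => hα s) hαs
  set t : ℝ := 1 - ∑ s ∈ Finset.range n, α s with ht_def
  have ht : 0 ≤ t := by simp only [ht_def]; linarith
  have hσle : ∀ ℓ, ∑ s ∈ Finset.range n, α s * ξs s ℓ ≤ ξ ℓ := by
    intro ℓ
    rw [← hcomb ℓ]
    exact Summable.sum_le_tsum _ (fun s _ => mul_nonneg (hα s) ((hξsm s).1 ℓ)) (hcoordsum ℓ)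
  have hσsum : ∑ ℓ, ∑ s ∈ Finset.range n, α s * ξs s ℓ = ∑ s ∈ Finset.range n, α s := by
    rw [Finset.sum_comm]
    refine Finset.sum_congr rfl fun s _ => ?_
    rw [← Finset.mul_sum, (hξsm s).2, mul_one]
  obtain ⟨η, hη, hrep⟩ : ∃ η, η ∈ stdSimplex ℝ K ∧
      ∀ ℓ, ξ ℓ = (∑ s ∈ Finset.range n, α s * ξs s ℓ) + t * η ℓ := by
    rcases eq_or_lt_of_le ht with ht0 | ht'
    · refine ⟨ξ, hξ, fun ℓ => ?_⟩
      have hT1 : ∑ s ∈ Finset.range n, α s = 1 := by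
        simp only [ht_def] at ht0; linarith
      have hzero : ∀ s ∉ Finset.range n, α s = 0 := by
        intro s hsn
        by_contra hne
        have hpos : 0 < α s := lt_of_le_of_ne (hα s) (Ne.symm hne)
        have hle : ∑ x ∈ insert s (Finset.range n), α x ≤ ∑' x, α x :=
          Summable.sum_le_tsum _ (fun i _ => hα i) hαs
        rw [Finset.sum_insert hsn, hsum, hT1] at hle
        linarith
      have : (∑' s, α s * ξs s ℓ) = ∑ s ∈ Finset.range n, α s * ξs s ℓ :=
        tsum_eq_sum fun s hsn => by rw [hzero s hsn, zero_mul]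
      rw [← hcomb ℓ, this, ← ht0, zero_mul, add_zero]
    · refine ⟨fun ℓ => (ξ ℓ - ∑ s ∈ Finset.range n, α s * ξs s ℓ) / t, ⟨fun ℓ => ?_, ?_⟩,
        fun ℓ => ?_⟩
      · exact div_nonneg (by linarith [hσle ℓ]) ht
      · rw [← Finset.sum_div, Finset.sum_sub_distrib, hξ.2, hσsum]
        field_simp
        exact ht_def.symm
      · field_simp
        ring
  set w : ℕ → ℝ := fun s => if s < n then α s else t with hw_def
  set p : ℕ → (K → ℝ) := fun s => if s < n then ξs s else η with hp_def
  have h1 : ∀ s ∈ Finset.range (n + 1), 0 ≤ w s := fun s _ => by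
    simp only [hw_def]; split
    · exact hα s
    · exact ht
  have hwn : ∑ s ∈ Finset.range n, w s = ∑ s ∈ Finset.range n, α s :=
    Finset.sum_congr rfl fun s hsn => by
      simp only [hw_def, if_pos (Finset.mem_range.mp hsn)]
  have h2 : ∑ s ∈ Finset.range (n + 1), w s = 1 := by
    rw [Finset.sum_range_succ, hwn]
    simp only [hw_def, lt_irrefl, if_neg (lt_irrefl n)]
    simp only [ht_def]; ring
  have h3 : ∀ s ∈ Finset.range (n + 1), p s ∈ stdSimplex ℝ K := fun s _ => by
    simp only [hp_def]; split
    · exact hξsm s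
    · exact hη
  have key := hg.le_map_sum h1 h2 h3
  have h4 : ∑ s ∈ Finset.range (n + 1), w s • p s = ξ := by
    funext ℓ
    rw [Finset.sum_apply]
    rw [Finset.sum_range_succ]
    have : ∑ s ∈ Finset.range n, (w s • p s) ℓ = ∑ s ∈ Finset.range n, α s * ξs s ℓ :=
      Finset.sum_congr rfl fun s hsn => by
        simp only [hw_def, hp_def, if_pos (Finset.mem_range.mp hsn), Pi.smul_apply,
          smul_eq_mul]
    rw [this]
    simp only [hw_def, hp_def, if_neg (lt_irrefl n), Pi.smul_apply, smul_eq_mul]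
    exact (hrep ℓ).symm
  have h5 : ∑ s ∈ Finset.range (n + 1), w s • g (p s)
      = (∑ s ∈ Finset.range n, α s * g (ξs s)) + t * g η := by
    rw [Finset.sum_range_succ]
    have : ∑ s ∈ Finset.range n, w s • g (p s) = ∑ s ∈ Finset.range n, α s * g (ξs s) :=
      Finset.sum_congr rfl fun s hsn => by
        simp only [hw_def, hp_def, if_pos (Finset.mem_range.mp hsn), smul_eq_mul]
    rw [this]
    simp only [hw_def, hp_def, if_neg (lt_irrefl n), smul_eq_mul]
  rw [h4, h5] at key
  have : 0 ≤ t * g η := mul_nonneg ht (hg0 η hη)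
  linarith

lemma tsum_parity (f g : ℕ → ℝ) (hf : Summable f) (hg : Summable g) :
    (∑' s : ℕ, (if Even s then f (s / 2) else g (s / 2))) = (∑' k, f k) + (∑' k, g k) := by
  set F : ℕ → ℝ := fun s => if Even s then f (s / 2) else g (s / 2) with hF
  have he : ∀ k : ℕ, F (2 * k) = f k := fun k => by
    simp only [hF]
    rw [if_pos (even_two_mul k)]
    congr 1; omega
  have ho : ∀ k : ℕ, F (2 * k + 1) = g k := fun k => by
    simp only [hF]
    rw [if_neg (by rw [Nat.even_iff]; omega)]
    congr 1; omega
  have hse : Summable (fun k => F (2 * k)) := (summable_congr he).mpr hf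
  have hso : Summable (fun k => F (2 * k + 1)) := (summable_congr ho).mpr hg
  calc (∑' s, F s) = (∑' k, F (2 * k)) + ∑' k, F (2 * k + 1) :=
        (tsum_even_add_odd hse hso).symm
    _ = (∑' k, f k) + ∑' k, g k := by rw [tsum_congr he, tsum_congr ho]

end AuxLemmas

lemma value_concaveOn {K : Type*} [Fintype K]
    {M : Matrix K K ℝ} (hM : IsStochastic M) {u : (K → ℝ) → ℝ}
    (hu0 : ∀ p ∈ stdSimplex ℝ K, 0 ≤ u p) {C : ℝ} (hC : ∀ p ∈ stdSimplex ℝ K, u p ≤ C)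
    {v : ℝ → (K → ℝ) → ℝ} (hv : IsValueFamily M u C v)
    {δ : ℝ} (hδ0 : 0 ≤ δ) (hδ1 : δ < 1) :
    ConcaveOn ℝ (stdSimplex ℝ K) (v δ) := by
  obtain ⟨hbd, hbell⟩ := hv δ ⟨hδ0, hδ1⟩
  refine ⟨convex_stdSimplex ℝ K, fun x hx y hy a b ha hb hab => ?_⟩
  have hz : a • x + b • y ∈ stdSimplex ℝ K := convex_stdSimplex ℝ K hx hy ha hb hab
  rcases eq_or_lt_of_le ha with ha0 | ha'
  · have hb1 : b = 1 := by linarith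
    have hxy : a • x + b • y = y := by
      funext ℓ; simp [← ha0, hb1]
    rw [hxy, ← ha0, hb1]; simp
  rcases eq_or_lt_of_le hb with hb0 | hb'
  · have ha1 : a = 1 := by linarith
    have hxy : a • x + b • y = x := by
      funext ℓ; simp [← hb0, ha1]
    rw [hxy, ← hb0, ha1]; simp
  -- main case : 0 < a, 0 < b
  have hSbddz : BddAbove {r : ℝ | ∃ α ξs, IsSplit (a • x + b • y) α ξs ∧
      r = splitPayoff M u δ (v δ) α ξs} := by
    refine ⟨C, ?_⟩
    rintro r ⟨α, ξs, hsp, rfl⟩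
    exact (payoff_aux hM hu0 hC hbd hδ0 hδ1 hsp).2.2
  have key : ∀ r1 ∈ {r : ℝ | ∃ α ξs, IsSplit x α ξs ∧ r = splitPayoff M u δ (v δ) α ξs},
      ∀ r2 ∈ {r : ℝ | ∃ α ξs, IsSplit y α ξs ∧ r = splitPayoff M u δ (v δ) α ξs},
      a * r1 + b * r2 ≤ v δ (a • x + b • y) := by
    rintro r1 ⟨α1, ξs1, h1, rfl⟩ r2 ⟨α2, ξs2, h2, rfl⟩
    set αc : ℕ → ℝ := fun s => if Even s then a * α1 (s / 2) else b * α2 (s / 2) with hαc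
    set ξc : ℕ → K → ℝ := fun s => if Even s then ξs1 (s / 2) else ξs2 (s / 2) with hξc
    have hsplit : IsSplit (a • x + b • y) αc ξc := by
      refine ⟨fun s => ?_, fun s => ?_, ?_, fun ℓ => ?_⟩
      · simp only [hαc]; split
        · exact mul_nonneg ha (h1.1 _)
        · exact mul_nonneg hb (h2.1 _)
      · simp only [hξc]; split
        · exact h1.2.1 _
        · exact h2.2.1 _
      · rw [show (fun s => αc s) = fun s =>
            (if Even s then (fun k => a * α1 k) (s / 2) else (fun k => b * α2 k) (s / 2))
            from rfl]
        rw [tsum_parity _ _ (h1.summable.mul_left a) (h2.summable.mul_left b),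
          tsum_mul_left, tsum_mul_left, h1.2.2.1, h2.2.2.1]
        simpa using hab
      · have hfun : (fun s => αc s * ξc s ℓ) = fun s =>
            (if Even s then (fun k => a * (α1 k * ξs1 k ℓ)) (s / 2)
              else (fun k => b * (α2 k * ξs2 k ℓ)) (s / 2)) := by
          funext s
          by_cases h : Even s <;> simp [hαc, hξc, h, mul_assoc]
        rw [hfun, tsum_parity _ _ ((h1.summable_coord ℓ).mul_left a)
            ((h2.summable_coord ℓ).mul_left b),
          tsum_mul_left, tsum_mul_left, h1.2.2.2 ℓ, h2.2.2.2 ℓ]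
        simp
    have hpayoff : splitPayoff M u δ (v δ) αc ξc
        = a * splitPayoff M u δ (v δ) α1 ξs1 + b * splitPayoff M u δ (v δ) α2 ξs2 := by
      unfold splitPayoff
      have hfun : (fun s => αc s * ((1 - δ) * u (ξc s) + δ * v δ (Matrix.vecMul (ξc s) M)))
          = fun s =>
            (if Even s then
              (fun k => a * (α1 k * ((1 - δ) * u (ξs1 k) + δ * v δ (Matrix.vecMul (ξs1 k) M)))) (s / 2)
            else
              (fun k => b * (α2 k * ((1 - δ) * u (ξs2 k) + δ * v δ (Matrix.vecMul (ξs2 k) M)))) (s / 2)) := by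
        funext s
        by_cases h : Even s <;> simp [hαc, hξc, h, mul_assoc]
      rw [hfun, tsum_parity _ _ ((payoff_aux hM hu0 hC hbd hδ0 hδ1 h1).2.1.mul_left a)
          ((payoff_aux hM hu0 hC hbd hδ0 hδ1 h2).2.1.mul_left b),
        tsum_mul_left, tsum_mul_left]
    rw [hbell _ hz]
    exact le_csSup hSbddz ⟨αc, ξc, hsplit, by rw [hpayoff]⟩
  have hSxne : Set.Nonempty {r : ℝ | ∃ α ξs, IsSplit x α ξs ∧ r = splitPayoff M u δ (v δ) α ξs} :=
    ⟨_, _, _, isSplit_trivial hx, rfl⟩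
  have hSyne : Set.Nonempty {r : ℝ | ∃ α ξs, IsSplit y α ξs ∧ r = splitPayoff M u δ (v δ) α ξs} :=
    ⟨_, _, _, isSplit_trivial hy, rfl⟩
  rw [hbell x hx, hbell y hy]
  set X := sSup {r : ℝ | ∃ α ξs, IsSplit x α ξs ∧ r = splitPayoff M u δ (v δ) α ξs}
  set Y := sSup {r : ℝ | ∃ α ξs, IsSplit y α ξs ∧ r = splitPayoff M u δ (v δ) α ξs}
  have step1 : ∀ r2 ∈ {r : ℝ | ∃ α ξs, IsSplit y α ξs ∧ r = splitPayoff M u δ (v δ) α ξs},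
      a * X + b * r2 ≤ v δ (a • x + b • y) := by
    intro r2 hr2
    have hX : X ≤ (v δ (a • x + b • y) - b * r2) / a := by
      refine csSup_le hSxne fun r1 hr1 => ?_
      rw [le_div_iff₀ ha']
      have := key r1 hr1 r2 hr2
      linarith
    have := (le_div_iff₀ ha').mp hX
    linarith
  have step2 : Y ≤ (v δ (a • x + b • y) - a * X) / b := by
    refine csSup_le hSyne fun r2 hr2 => ?_
    rw [le_div_iff₀ hb']
    have := step1 r2 hr2
    linarith
  have := (le_div_iff₀ hb').mp step2
  simp only [smul_eq_mul]
  linarith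

theorem markovian_persuasion_no_information_optimal_at_cav_point
    {K : Type*} [Fintype K] [Nonempty K]
    (M : Matrix K K ℝ) (hM : IsStochastic M)
    (u : (K → ℝ) → ℝ) (hu0 : ∀ ξ ∈ stdSimplex ℝ K, 0 ≤ u ξ)
    (husc : UpperSemicontinuousOn u (stdSimplex ℝ K))
    (C : ℝ) (hC : IsLUB (u '' stdSimplex ℝ K) C)
    (v : ℝ → (K → ℝ) → ℝ) (hv : IsValueFamily M u C v)
    (ξ : K → ℝ) (hξ : ξ ∈ stdSimplex ℝ K) (hcav : u ξ = cav u ξ) :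
    ∀ δ : ℝ, 0 ≤ δ → δ < 1 →
      v δ ξ = (1 - δ) * u ξ + δ * v δ (Matrix.vecMul ξ M) := by
  intro δ hδ0 hδ1
  obtain ⟨hbd, hbell⟩ := hv δ ⟨hδ0, hδ1⟩
  have huC : ∀ p ∈ stdSimplex ℝ K, u p ≤ C := fun p hp => hC.1 ⟨p, hp, rfl⟩
  have hconc : ConcaveOn ℝ (stdSimplex ℝ K) (v δ) := value_concaveOn hM hu0 huC hv hδ0 hδ1
  have hmem : (1 - δ) * u ξ + δ * v δ (Matrix.vecMul ξ M) ∈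
      {r : ℝ | ∃ α ξs, IsSplit ξ α ξs ∧ r = splitPayoff M u δ (v δ) α ξs} :=
    ⟨_, _, isSplit_trivial hξ, (splitPayoff_trivial M u δ (v δ) ξ).symm⟩
  have hub : ∀ r ∈ {r : ℝ | ∃ α ξs, IsSplit ξ α ξs ∧ r = splitPayoff M u δ (v δ) α ξs},
      r ≤ (1 - δ) * u ξ + δ * v δ (Matrix.vecMul ξ M) := by
    rintro r ⟨α, ξs, hs, rfl⟩
    have keyh : ∀ h : (K → ℝ) → ℝ, ConcaveOn ℝ (stdSimplex ℝ K) h →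
        (∀ p ∈ stdSimplex ℝ K, u p ≤ h p) →
        splitPayoff M u δ (v δ) α ξs ≤ (1 - δ) * h ξ + δ * v δ (Matrix.vecMul ξ M) := by
      intro h hh hmaj
      set g : (K → ℝ) → ℝ := fun p => (1 - δ) * h p + δ * v δ (Matrix.vecMul p M) with hg
      have hgconc : ConcaveOn ℝ (stdSimplex ℝ K) g := by
        refine ⟨convex_stdSimplex ℝ K, fun p hp q hq a b ha hb hab => ?_⟩
        have h1 := hh.2 hp hq ha hb hab
        have hlin : Matrix.vecMul (a • p + b • q) M
            = a • Matrix.vecMul p M + b • Matrix.vecMul q M := by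
          rw [Matrix.add_vecMul, Matrix.smul_vecMul, Matrix.smul_vecMul]
        have h2 := hconc.2 (vecMul_mem_simplex hM hp) (vecMul_mem_simplex hM hq) ha hb hab
        rw [← hlin] at h2
        simp only [smul_eq_mul] at h1 h2 ⊢
        have e1 := mul_le_mul_of_nonneg_left h1 (show (0:ℝ) ≤ 1 - δ by linarith)
        have e2 := mul_le_mul_of_nonneg_left h2 hδ0
        simp only [hg]
        nlinarith [e1, e2]
      have hg0 : ∀ p ∈ stdSimplex ℝ K, 0 ≤ g p := fun p hp => by
        simp only [hg]
        exact add_nonneg (mul_nonneg (by linarith) (le_trans (hu0 p hp) (hmaj p hp)))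
          (mul_nonneg hδ0 (hbd _ (vecMul_mem_simplex hM hp)).1)
      have hterm : ∀ s, α s * ((1 - δ) * u (ξs s) + δ * v δ (Matrix.vecMul (ξs s) M))
          ≤ α s * g (ξs s) := by
        intro s
        refine mul_le_mul_of_nonneg_left ?_ (hs.1 s)
        have h' := hmaj _ (hs.2.1 s)
        simp only [hg]
        nlinarith
      have hle : splitPayoff M u δ (v δ) α ξs ≤ g ξ := by
        refine Real.tsum_le_of_sum_range_le
          (payoff_aux hM hu0 huC hbd hδ0 hδ1 hs).1 (fun n => ?_)
        exact le_trans (Finset.sum_le_sum fun s _ => hterm s) (jensen_split hgconc hg0 hξ hs n)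
      simpa only [hg] using hle
    have hYne : Set.Nonempty {y : ℝ | ∃ h : (K → ℝ) → ℝ,
        ConcaveOn ℝ (stdSimplex ℝ K) h ∧ (∀ p ∈ stdSimplex ℝ K, u p ≤ h p) ∧ y = h ξ} :=
      ⟨C, fun _ => C, concaveOn_const C (convex_stdSimplex ℝ K), fun p hp => huC p hp, rfl⟩
    have hlow : (splitPayoff M u δ (v δ) α ξs - δ * v δ (Matrix.vecMul ξ M)) / (1 - δ)
        ≤ cav u ξ := by
      refine le_csInf hYne ?_
      rintro y ⟨h, hh, hmaj, rfl⟩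
      rw [div_le_iff₀ (show (0:ℝ) < 1 - δ by linarith)]
      have := keyh h hh hmaj
      linarith
    rw [← hcav] at hlow
    have := (div_le_iff₀ (show (0:ℝ) < 1 - δ by linarith)).mp hlow
    linarith
  rw [hbell ξ hξ]
  exact le_antisymm (csSup_le ⟨_, hmem⟩ hub) (le_csSup ⟨_, hub⟩ hmem)
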